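/- The maximal output-nulling controlled-invariant subspace V*(Σ) of a linear system (A,B,C,D) equals Im Π_max, where (Π_max, H_max, Λ_max) is a maximal solution (in the sense of range inclusion) of the equations AΠ + BH = ΠΛ, CΠ + DH = 0. -/

import Mathlib

open Matrix

noncomputable section

/-- Map a complex matrix entrywise to rational functions. -/
def mc {a b : ℕ} (M : Matrix (Fin a) (Fin b) ℂ) : Matrix (Fin a) (Fin b) (RatFunc ℂ) :=
  M.map (⇑(RatFunc.C : ℂ →+* RatFunc ℂ))

/-- The resolvent `(z I − M)⁻¹` as a matrix of rational functions. -/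
def res {a : ℕ} (M : Matrix (Fin a) (Fin a) ℂ) : Matrix (Fin a) (Fin a) (RatFunc ℂ) :=
  ((Matrix.scalar (Fin a) (RatFunc.X : RatFunc ℂ)) - mc M)⁻¹

/-- The "anti-resolvent" `(z I + M)⁻¹`, used for para-hermitian conjugates. -/
def resneg {a : ℕ} (M : Matrix (Fin a) (Fin a) ℂ) : Matrix (Fin a) (Fin a) (RatFunc ℂ) :=
  ((Matrix.scalar (Fin a) (RatFunc.X : RatFunc ℂ)) + mc M)⁻¹

/-- Observability of a pair `(C, A)`. -/
def Observable {p n : ℕ} (C : Matrix (Fin p) (Fin n) ℂ) (A : Matrix (Fin n) (Fin n) ℂ) : Prop :=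
  ∀ v : Fin n → ℂ, (∀ k : ℕ, C *ᵥ ((A ^ k) *ᵥ v) = 0) → v = 0

/-- Controllability of a pair `(Λ, G)`. -/
def Controllable {r m : ℕ} (L : Matrix (Fin r) (Fin r) ℂ) (G : Matrix (Fin r) (Fin m) ℂ) : Prop :=
  ∀ y : Fin r → ℂ, (∀ k : ℕ, y ᵥ* ((L ^ k) * G) = 0) → y = 0

/-- The range (column space) of a matrix, as a submodule of `ℂⁿ`. -/
def mrange {a b : ℕ} (M : Matrix (Fin a) (Fin b) ℂ) : Submodule ℂ (Fin a → ℂ) :=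
  LinearMap.range M.mulVecLin

/-- The set of states reachable from the origin by a finite input sequence
producing identically zero output along the way (the minimal input-containing
subspace `C*(Σ)`). -/
def OutNullReach {n p q : ℕ} (A : Matrix (Fin n) (Fin n) ℂ) (B : Matrix (Fin n) (Fin q) ℂ)
    (C : Matrix (Fin p) (Fin n) ℂ) (D : Matrix (Fin p) (Fin q) ℂ) (x : Fin n → ℂ) : Prop :=
  ∃ (j : ℕ) (ξ : ℕ → (Fin n → ℂ)) (u : ℕ → (Fin q → ℂ)),
    ξ 0 = 0 ∧ (∀ i < j, ξ (i + 1) = A *ᵥ ξ i + B *ᵥ u i ∧ C *ᵥ ξ i + D *ᵥ u i = 0) ∧ ξ j = x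

/-- A subspace `V` is output-nulling controlled-invariant for `(A,B,C,D)`. -/
def ONCI {n p q : ℕ} (A : Matrix (Fin n) (Fin n) ℂ) (B : Matrix (Fin n) (Fin q) ℂ)
    (C : Matrix (Fin p) (Fin n) ℂ) (D : Matrix (Fin p) (Fin q) ℂ)
    (V : Submodule ℂ (Fin n → ℂ)) : Prop :=
  ∃ K : Matrix (Fin q) (Fin n) ℂ,
    (∀ x ∈ V, (A + B * K) *ᵥ x ∈ V) ∧ (∀ x ∈ V, (C + D * K) *ᵥ x = 0)

/-- the maximal output-nulling controlled-invariant subspace equals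
the range of a range-maximal solution of the zero equation. -/
theorem stmt3 {n p q s : ℕ}
    (A : Matrix (Fin n) (Fin n) ℂ) (B : Matrix (Fin n) (Fin q) ℂ)
    (C : Matrix (Fin p) (Fin n) ℂ) (D : Matrix (Fin p) (Fin q) ℂ)
    (Pmax : Matrix (Fin n) (Fin s) ℂ) (Hmax : Matrix (Fin q) (Fin s) ℂ)
    (Λmax : Matrix (Fin s) (Fin s) ℂ)
    (h1 : A * Pmax + B * Hmax = Pmax * Λmax) (h2 : C * Pmax + D * Hmax = 0)
    (hmax : ∀ (t : ℕ) (P : Matrix (Fin n) (Fin t) ℂ) (H : Matrix (Fin q) (Fin t) ℂ)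
      (L : Matrix (Fin t) (Fin t) ℂ),
      A * P + B * H = P * L → C * P + D * H = 0 → mrange P ≤ mrange Pmax) :
    ONCI A B C D (mrange Pmax) ∧
      ∀ V : Submodule ℂ (Fin n → ℂ), ONCI A B C D V → V ≤ mrange Pmax := by
  classical
  constructor
  · -- `mrange Pmax` is output-nulling controlled-invariant
    obtain ⟨σ, hσ⟩ := (Pmax.mulVecLin.rangeRestrict).exists_rightInverse_of_surjective
      (LinearMap.range_eq_top.mpr (LinearMap.surjective_rangeRestrict _))
    obtain ⟨W, hW⟩ := Submodule.exists_isCompl (mrange Pmax)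
    let π := (mrange Pmax).linearProjOfIsCompl W hW
    let g : (Fin n → ℂ) →ₗ[ℂ] (Fin q → ℂ) := Hmax.mulVecLin ∘ₗ σ ∘ₗ π
    have hcommon : ∀ x, ∀ hx : x ∈ mrange Pmax, ∃ w : Fin s → ℂ,
        Pmax *ᵥ w = x ∧ (LinearMap.toMatrix' g) *ᵥ x = Hmax *ᵥ w := by
      intro x hx
      refine ⟨σ ⟨x, hx⟩, ?_, ?_⟩
      · have := congrArg Subtype.val (LinearMap.congr_fun hσ ⟨x, hx⟩)
        simpa using this
      · have hKx : (LinearMap.toMatrix' g) *ᵥ x = g x := by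
          rw [← Matrix.toLin'_apply, Matrix.toLin'_toMatrix']
        have hπx : π x = ⟨x, hx⟩ := Submodule.linearProjOfIsCompl_apply_left hW ⟨x, hx⟩
        rw [hKx]
        show Hmax *ᵥ (σ (π x)) = _
        rw [hπx]
        rfl
    refine ⟨LinearMap.toMatrix' g, ?_, ?_⟩
    · intro x hx
      obtain ⟨w, hPw, hKx⟩ := hcommon x hx
      have : (A + B * LinearMap.toMatrix' g) *ᵥ x = Pmax *ᵥ (Λmax *ᵥ w) := by
        rw [Matrix.add_mulVec, ← Matrix.mulVec_mulVec, hKx, ← hPw,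
          Matrix.mulVec_mulVec, Matrix.mulVec_mulVec, ← Matrix.add_mulVec, h1,
          ← Matrix.mulVec_mulVec]
      rw [this]
      exact ⟨Λmax *ᵥ w, rfl⟩
    · intro x hx
      obtain ⟨w, hPw, hKx⟩ := hcommon x hx
      rw [Matrix.add_mulVec, ← Matrix.mulVec_mulVec, hKx, ← hPw,
        Matrix.mulVec_mulVec, Matrix.mulVec_mulVec, ← Matrix.add_mulVec, h2,
        Matrix.zero_mulVec]
  · -- maximality
    rintro V ⟨K, hK1, hK2⟩
    obtain ⟨W, hW⟩ := Submodule.exists_isCompl V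
    let e : (Fin n → ℂ) →ₗ[ℂ] (Fin n → ℂ) := V.subtype ∘ₗ V.linearProjOfIsCompl W hW
    let P : Matrix (Fin n) (Fin n) ℂ := LinearMap.toMatrix' e
    have hPv : ∀ v, P *ᵥ v = e v := fun v => by
      rw [← Matrix.toLin'_apply, Matrix.toLin'_toMatrix']
    have hPmem : ∀ v, P *ᵥ v ∈ V := fun v => by
      rw [hPv]; exact (V.linearProjOfIsCompl W hW v).2
    have hfix : ∀ x ∈ V, P *ᵥ x = x := fun x hx => by
      rw [hPv]
      have : V.linearProjOfIsCompl W hW x = ⟨x, hx⟩ :=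
        Submodule.linearProjOfIsCompl_apply_left hW ⟨x, hx⟩
      simp [e, this]
    have hrange : mrange P = V := by
      apply le_antisymm
      · rintro _ ⟨v, rfl⟩; exact hPmem v
      · intro x hx; exact ⟨x, hfix x hx⟩
    have eq1 : A * P + B * (K * P) = P * ((A + B * K) * P) := by
      apply Matrix.toLin'.injective
      apply LinearMap.ext
      intro v
      simp only [Matrix.toLin'_apply]
      have step : (A * P + B * (K * P)) *ᵥ v = (A + B * K) *ᵥ (P *ᵥ v) := by
        simp only [Matrix.add_mulVec, ← Matrix.mulVec_mulVec]
      rw [step, ← Matrix.mulVec_mulVec, ← Matrix.mulVec_mulVec]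
      exact (hfix _ (hK1 _ (hPmem v))).symm
    have eq2 : C * P + D * (K * P) = 0 := by
      apply Matrix.toLin'.injective
      apply LinearMap.ext
      intro v
      simp only [Matrix.toLin'_apply, Matrix.zero_mulVec]
      have step : (C * P + D * (K * P)) *ᵥ v = (C + D * K) *ᵥ (P *ᵥ v) := by
        simp only [Matrix.add_mulVec, ← Matrix.mulVec_mulVec]
      rw [step]
      simpa using hK2 _ (hPmem v)
    have key := hmax n P (K * P) ((A + B * K) * P) eq1 eq2
    rw [hrange] at key
    exact key
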